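/- The tropical equilibration set of the system {y − x − εx⁴ = 0, x − y + εy² = 0}, i.e., the set of pairs (a₁, a₂) ∈ ℝ² satisfying min(a₁, 1 + 4a₁) = a₂ and min(a₁, 1 + 2a₂) = a₂ (with the minimum in each tropical polynomial attained by monomials of opposite signs), equals the union of the half-line {(a, a) : a ≥ −1/3} and the isolated point (−1/2, −1). -/
import Mathlib


/-- The tropical equilibration set of {y − x − εx⁴ = 0, x − y + εy² = 0}:
the conditions min(a₁, 1+4a₁) = a₂ and min(a₁, 1+2a₂) = a₂ define exactly the
half-line {(a,a) : a ≥ -1/3} together with the isolated point (-1/2, -1). -/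
theorem stmt_4 :
    {p : ℝ × ℝ | min p.1 (1 + 4 * p.1) = p.2 ∧ min p.1 (1 + 2 * p.2) = p.2}
      = {p : ℝ × ℝ | p.1 = p.2 ∧ -1/3 ≤ p.1} ∪ {((-1/2 : ℝ), (-1 : ℝ))} := by
  ext ⟨a, b⟩
  simp only [Set.mem_setOf_eq, Set.mem_union, Set.mem_singleton_iff, Prod.mk.injEq]
  constructor
  · rintro ⟨h1, h2⟩
    rcases le_total a (1 + 4 * a) with hc | hc
    · rw [min_eq_left hc] at h1
      rcases le_total a (1 + 2 * b) with hd | hd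
      · rw [min_eq_left hd] at h2
        left; exact ⟨h2, by linarith⟩
      · rw [min_eq_right hd] at h2
        left; exact ⟨by linarith, by linarith⟩
    · rw [min_eq_right hc] at h1
      rcases le_total a (1 + 2 * b) with hd | hd
      · rw [min_eq_left hd] at h2
        left; exact ⟨h2, by linarith⟩
      · rw [min_eq_right hd] at h2
        right; exact ⟨by linarith, by linarith⟩
  · rintro (⟨h1, h2⟩ | ⟨h1, h2⟩)
    · obtain rfl : a = b := h1
      constructor
      · rw [min_eq_left (by linarith)]
      · rw [min_eq_left (by linarith)]
    · subst h1; subst h2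
      constructor
      · rw [min_eq_right (by norm_num)]; norm_num
      · rw [min_eq_right (by norm_num)]; norm_num
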